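/- (Two-step upper bound on the optimum.) Consider any multistage instance with intersection bonus and T ≥ 2 time steps, and for each t ∈ {1,…,T−1} let z*_t = max{ p_t(A) + p_{t+1}(B) + |A ∩ B| : A ∈ F_t, B ∈ F_{t+1} } be the optimal value of the two-step subproblem on time steps t and t+1. Then every solution sequence (Ŝ_1,…,Ŝ_T) satisfies f(Ŝ_1,…,Ŝ_T) ≤ Σ_{t=1}^{T−1} z*_t; in particular OPT ≤ Σ_{t=1}^{T−1} z*_t. -/

import Mathlib

/-- The value of a solution sequence under the intersection bonus: total profit
plus, for each pair of consecutive steps, the size of the intersection of the two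
solutions. -/
noncomputable def intVal (n T : ℕ) (p : ℕ → Finset (Fin n) → ℝ)
    (S : ℕ → Finset (Fin n)) : ℝ :=
  (∑ t ∈ Finset.range T, p t (S t)) +
    ∑ t ∈ Finset.range (T - 1), ((S t ∩ S (t + 1)).card : ℝ)

/-- A valid multistage instance: the empty set is feasible at every time step and
profits are nonnegative. -/
def ValidInstance (n T : ℕ) (F : ℕ → Set (Finset (Fin n)))
    (p : ℕ → Finset (Fin n) → ℝ) : Prop :=
  (∀ t, t < T → (∅ : Finset (Fin n)) ∈ F t) ∧ ∀ t, t < T → ∀ S, 0 ≤ p t S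

/-- A solution sequence: feasible at every time step. -/
def IsSol (n T : ℕ) (F : ℕ → Set (Finset (Fin n))) (S : ℕ → Finset (Fin n)) : Prop :=
  ∀ t, t < T → S t ∈ F t

/-- A deterministic online algorithm: the solution output at time `t < T` depends
only on the data `(F_s, p_s)` revealed up to time `s ≤ t`. -/
def IsOnline (n T : ℕ)
    (alg : (ℕ → Set (Finset (Fin n))) → (ℕ → Finset (Fin n) → ℝ) → ℕ → Finset (Fin n)) :
    Prop :=
  ∀ F p F' p', ∀ t, t < T →
    (∀ s, s ≤ t → F s = F' s ∧ p s = p' s) → alg F p t = alg F' p' t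

/-- Two-step upper bound on the optimum: if for each `t` with `t + 1 < T` the value
`z t` is the maximum of `p t A + p (t+1) B + |A ∩ B|` over `A ∈ F t`, `B ∈ F (t+1)`,
then every solution sequence has intersection-bonus value at most
`∑_{t=0}^{T-2} z t`; in particular `OPT ≤ ∑_{t=0}^{T-2} z t`. -/
theorem stmt13 (n T : ℕ) (hT : 2 ≤ T)
    (F : ℕ → Set (Finset (Fin n))) (p : ℕ → Finset (Fin n) → ℝ)
    (hvalid : ValidInstance n T F p)
    (z : ℕ → ℝ)
    (hub : ∀ t, t + 1 < T → ∀ A ∈ F t, ∀ B ∈ F (t + 1),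
      p t A + p (t + 1) B + ((A ∩ B).card : ℝ) ≤ z t)
    (hattained : ∀ t, t + 1 < T → ∃ A ∈ F t, ∃ B ∈ F (t + 1),
      z t = p t A + p (t + 1) B + ((A ∩ B).card : ℝ)) :
    ∀ Shat : ℕ → Finset (Fin n), IsSol n T F Shat →
      intVal n T p Shat ≤ ∑ t ∈ Finset.range (T - 1), z t := by
  intro Shat hsol
  obtain ⟨hF, hp⟩ := hvalid
  have key : intVal n T p Shat ≤
      ∑ t ∈ Finset.range (T - 1),
        (p t (Shat t) + p (t + 1) (Shat (t + 1)) +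
          ((Shat t ∩ Shat (t + 1)).card : ℝ)) := by
    unfold intVal
    have hTsucc : T = (T - 1) + 1 := by omega
    have hsplit : ∑ t ∈ Finset.range T, p t (Shat t) =
        (∑ t ∈ Finset.range (T - 1), p t (Shat t)) + p (T - 1) (Shat (T - 1)) := by
      conv_lhs => rw [hTsucc]
      rw [Finset.sum_range_succ]
    have hlast : p (T - 1) (Shat (T - 1)) ≤
        ∑ t ∈ Finset.range (T - 1), p (t + 1) (Shat (t + 1)) := by
      have hmem : T - 2 ∈ Finset.range (T - 1) := by
        simp only [Finset.mem_range]; omega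
      have heq : T - 2 + 1 = T - 1 := by omega
      calc p (T - 1) (Shat (T - 1)) = p (T - 2 + 1) (Shat (T - 2 + 1)) := by rw [heq]
        _ ≤ ∑ t ∈ Finset.range (T - 1), p (t + 1) (Shat (t + 1)) := by
            apply Finset.single_le_sum (f := fun t => p (t + 1) (Shat (t + 1))) (fun t ht => ?_) hmem
            exact hp (t + 1) (by simp only [Finset.mem_range] at ht; omega) _
    have : ∑ t ∈ Finset.range T, p t (Shat t) ≤
        ∑ t ∈ Finset.range (T - 1), (p t (Shat t) + p (t + 1) (Shat (t + 1))) := by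
      rw [hsplit, Finset.sum_add_distrib]
      linarith
    have := add_le_add_left this
      (∑ t ∈ Finset.range (T - 1), ((Shat t ∩ Shat (t + 1)).card : ℝ))
    calc _ ≤ _ := this
      _ = _ := by rw [← Finset.sum_add_distrib]
  refine key.trans (Finset.sum_le_sum fun t ht => ?_)
  have ht' : t + 1 < T := by simp only [Finset.mem_range] at ht; omega
  exact hub t ht' _ (hsol t (by omega)) _ (hsol (t + 1) ht')
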